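/- Rational generating function: as formal power series in x over the ring ℤ[p,q] (allowing negative powers of p, or assuming t large enough), Σ_{n≥k} W*_{m,r}[n,k;t]_{p,q} x^{n-k} = 1 / Π_{j=0}^{k} (1 - x · p^{m(t-j)} · [mj+r]_{p,q}), equivalently Π_{j=0}^{k} (1 - x p^{m(t-j)} [mj+r]_{p,q}) · Σ_{n≥k} W*_{m,r}[n,k;t]_{p,q} x^{n-k} = 1. -/

import Mathlib

open Finset

/-- `p` as an indeterminate in `ℤ[p,q]`. -/
noncomputable def P : MvPolynomial (Fin 2) ℤ := MvPolynomial.X 0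

/-- `q` as an indeterminate in `ℤ[p,q]`. -/
noncomputable def Q : MvPolynomial (Fin 2) ℤ := MvPolynomial.X 1

/-- The (p,q)-number `[s]_{p,q} = Σ_{i=0}^{s-1} p^{s-1-i} q^i`. -/
noncomputable def pqNum (s : ℕ) : MvPolynomial (Fin 2) ℤ :=
  ∑ i ∈ Finset.range s, P ^ (s - 1 - i) * Q ^ i

/-- Second form of the type 2 (p,q)-analogue of the r-Whitney numbers of the
second kind, `W*_{m,r}[n,k;t]_{p,q}`. -/
noncomputable def Wstar (m r t : ℕ) : ℕ → ℕ → MvPolynomial (Fin 2) ℤ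
  | 0, 0 => 1
  | 0, _ + 1 => 0
  | n + 1, 0 => pqNum r * P ^ (m * t) * Wstar m r t n 0
  | n + 1, k + 1 =>
      Wstar m r t n k +
        pqNum (m * (k + 1) + r) * P ^ (m * (t - (k + 1))) * Wstar m r t n (k + 1)

lemma wstar_eq_zero (m r t : ℕ) : ∀ n k, n < k → Wstar m r t n k = 0 := by
  intro n
  induction n with
  | zero =>
      intro k hk
      match k, hk with
      | k + 1, _ => rfl
  | succ n ih =>
      intro k hk
      match k, hk with
      | k + 1, hk =>
          rw [Wstar, ih k (by omega), ih (k + 1) (by omega)]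
          ring

lemma wstar_diag (m r t n : ℕ) : Wstar m r t n n = 1 := by
  induction n with
  | zero => rfl
  | succ n ih => rw [Wstar, ih, wstar_eq_zero m r t n (n + 1) (by omega)]; ring

lemma wstar_key (c : MvPolynomial (Fin 2) ℤ) (f : ℕ → MvPolynomial (Fin 2) ℤ) :
    (1 - PowerSeries.X * PowerSeries.C (R := MvPolynomial (Fin 2) ℤ) c) * PowerSeries.mk f =
      PowerSeries.mk (fun n => match n with
        | 0 => f 0
        | n + 1 => f (n + 1) - c * f n) := by
  ext n
  cases n with
  | zero => simp [PowerSeries.coeff_zero_eq_constantCoeff]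
  | succ n =>
      rw [sub_mul, one_mul, map_sub, mul_assoc]
      rw [PowerSeries.coeff_succ_X_mul]
      simp [PowerSeries.coeff_mk]

theorem wstar_rational_generating_function (m r t k : ℕ) (ht : k ≤ t) :
    (∏ j ∈ Finset.range (k + 1),
        (1 - PowerSeries.X * PowerSeries.C (R := MvPolynomial (Fin 2) ℤ)
              (P ^ (m * (t - j)) * pqNum (m * j + r)))) *
      PowerSeries.mk (fun n => Wstar m r t (n + k) k) = 1 := by
  clear ht
  induction k with
  | zero =>
      rw [Finset.prod_range_one, wstar_key]
      refine PowerSeries.ext fun n => ?_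
      cases n with
      | zero => simp [Wstar]
      | succ n =>
          simp only [PowerSeries.coeff_mk, PowerSeries.coeff_one, Nat.succ_ne_zero,
            if_false]
          show Wstar m r t (n + 1 + 0) 0 - _ = 0
          rw [Nat.add_zero, Wstar, Nat.sub_zero, Nat.mul_zero, Nat.zero_add]
          ring
  | succ k ih =>
      rw [Finset.prod_range_succ, mul_assoc, wstar_key]
      have h : (PowerSeries.mk fun n =>
          match n with
          | 0 => Wstar m r t (0 + (k + 1)) (k + 1)
          | n + 1 => Wstar m r t (n + 1 + (k + 1)) (k + 1) -
              P ^ (m * (t - (k + 1))) * pqNum (m * (k + 1) + r) *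
                Wstar m r t (n + (k + 1)) (k + 1)) =
          PowerSeries.mk (fun n => Wstar m r t (n + k) k) := by
        refine PowerSeries.ext fun n => ?_
        cases n with
        | zero =>
            simp only [PowerSeries.coeff_mk]
            show Wstar m r t (0 + (k + 1)) (k + 1) = Wstar m r t (0 + k) k
            simp only [Nat.zero_add]
            rw [wstar_diag, wstar_diag]
        | succ n =>
            simp only [PowerSeries.coeff_mk]
            show Wstar m r t (n + 1 + (k + 1)) (k + 1) - _ = Wstar m r t (n + 1 + k) k
            have : n + 1 + (k + 1) = (n + k + 1) + 1 := by omega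
            rw [this, Wstar]
            have : n + (k + 1) = n + k + 1 := by omega
            rw [this]
            ring_nf
      rw [h, ih]
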